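/- Let R be a Γ-graded von Neumann regular graded right self-injective ring and J a graded two-sided ideal of R such that R/J is graded nonsingular, i.e. for every homogeneous x ∈ R with x ∉ J, the graded right ideal {r ∈ R : xr ∈ J} is not graded essential in R. Then J = eR for some central homogeneous idempotent e of R. -/
import Mathlib


/- Setting: `Γ = ι` an additive abelian group, `R` a `ι`-graded ring with identity,
with homogeneous components the additive subgroups `𝒜 γ`. -/

variable {ι R : Type*}

section Defs
variable [DecidableEq ι] [AddCommGroup ι] [Ring R] (𝒜 : ι → AddSubgroup R) [GradedRing 𝒜]

/-- An element of `R` is homogeneous if it lies in some component `𝒜 γ`. -/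
def IsHomog (a : R) : Prop := ∃ γ : ι, a ∈ 𝒜 γ

/-- `R` is graded von Neumann regular: every homogeneous element has an inner inverse. -/
def GradedVNRegular : Prop := ∀ a : R, IsHomog 𝒜 a → ∃ b : R, a * b * a = a

/-- A subset of `R` is a right ideal. -/
def IsRightIdealSet (I : Set R) : Prop :=
  (0 : R) ∈ I ∧ (∀ x ∈ I, ∀ y ∈ I, x + y ∈ I) ∧ ∀ x ∈ I, ∀ r : R, x * r ∈ I

/-- A graded right ideal: a right ideal containing all homogeneous components of
its elements. -/
def IsGradedRightIdeal (I : Set R) : Prop :=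
  IsRightIdealSet I ∧ ∀ x ∈ I, ∀ γ : ι, ((DirectSum.decompose 𝒜 x γ : 𝒜 γ) : R) ∈ I

/-- `A` is graded essential in `B` (as graded right ideals): `A ⊆ B` and every nonzero
graded right ideal contained in `B` meets `A` nontrivially. -/
def GradedEssentialIn (A B : Set R) : Prop :=
  A ⊆ B ∧ ∀ J : Set R, IsGradedRightIdeal 𝒜 J → J ⊆ B → (∃ x ∈ J, x ≠ 0) →
    ∃ x, x ∈ A ∩ J ∧ x ≠ 0

/-- Graded Baer criterion: `R` is graded right self-injective. A homomorphism from a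
graded right ideal `I` to `R` is encoded as a function `f : R → R` which is additive on
`I`, right `R`-linear on `I`, and of degree `γ` on `I`. -/
def GradedSelfInjective : Prop :=
  ∀ I : Set R, IsGradedRightIdeal 𝒜 I → ∀ γ : ι, ∀ f : R → R,
    (∀ x ∈ I, ∀ y ∈ I, f (x + y) = f x + f y) →
    (∀ x ∈ I, ∀ r : R, f (x * r) = f x * r) →
    (∀ δ : ι, ∀ x ∈ I, x ∈ 𝒜 δ → f x ∈ 𝒜 (γ + δ)) →
    ∃ c ∈ 𝒜 γ, ∀ x ∈ I, f x = c * x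

/-- A graded two-sided ideal of `R`. -/
def IsGradedTwoSidedIdeal (J : Set R) : Prop :=
  IsGradedRightIdeal 𝒜 J ∧ ∀ x ∈ J, ∀ r : R, r * x ∈ J

end Defs

section Helpers
variable [DecidableEq ι] [AddCommGroup ι] [Ring R] (𝒜 : ι → AddSubgroup R) [GradedRing 𝒜]

theorem myDecomp_mul_left {a : R} {i : ι} (ha : a ∈ 𝒜 i) (b : R) (j : ι) :
    ((DirectSum.decompose 𝒜 (a * b) (i + j) : 𝒜 (i + j)) : R)
      = a * ((DirectSum.decompose 𝒜 b j : 𝒜 j) : R) := by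
  lift a to 𝒜 i using ha
  rw [DirectSum.decompose_mul, DirectSum.decompose_coe, DirectSum.coe_of_mul_apply_add]

theorem myDecomp_mul_right {a : R} {i : ι} (ha : a ∈ 𝒜 i) (b : R) (j : ι) :
    ((DirectSum.decompose 𝒜 (b * a) (j + i) : 𝒜 (j + i)) : R)
      = ((DirectSum.decompose 𝒜 b j : 𝒜 j) : R) * a := by
  lift a to 𝒜 i using ha
  rw [DirectSum.decompose_mul, DirectSum.decompose_coe, DirectSum.coe_mul_of_apply_add]

theorem my_reg_homog (hreg : GradedVNRegular 𝒜) {a : R} {δ : ι} (ha : a ∈ 𝒜 δ) :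
    ∃ b ∈ 𝒜 (-δ), a * (b * a) = a := by
  obtain ⟨b, hb⟩ := hreg a ⟨δ, ha⟩
  have hcast : ∀ (y : R) {i k : ι}, i = k →
      ((DirectSum.decompose 𝒜 y i : 𝒜 i) : R) = ((DirectSum.decompose 𝒜 y k : 𝒜 k) : R) := by
    rintro y i k rfl; rfl
  refine ⟨_, SetLike.coe_mem (DirectSum.decompose 𝒜 b (-δ)), ?_⟩
  have h2 := myDecomp_mul_right 𝒜 ha b (-δ)
  have h1 := myDecomp_mul_left 𝒜 ha (b * a) 0
  rw [← hcast (b * a) (neg_add_cancel δ), h2] at h1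
  rw [hcast (a * (b * a)) (add_zero δ)] at h1
  rw [mul_assoc] at hb
  rw [hb, DirectSum.decompose_of_mem_same 𝒜 ha] at h1
  exact h1.symm

/-- A nonzero element of a graded right ideal yields a nonzero homogeneous element. -/
theorem my_exists_homog {I : Set R} (hI : IsGradedRightIdeal 𝒜 I) {x : R} (hx : x ∈ I)
    (hx0 : x ≠ 0) : ∃ y ∈ I, ∃ γ : ι, y ∈ 𝒜 γ ∧ y ≠ 0 := by
  classical
  by_contra h
  push_neg at h
  apply hx0
  rw [← DirectSum.sum_support_decompose 𝒜 x]
  refine Finset.sum_eq_zero fun γ _ => ?_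
  exact h _ (hI.2 x hx γ) γ (SetLike.coe_mem _)

/-- The "J-part" of an element of `J ⊕ K`. -/
noncomputable def jpart (J K : Set R) (x : R) : R :=
  @dite _ (∃ j, j ∈ J ∧ ∃ k, k ∈ K ∧ x = j + k) (Classical.propDecidable _)
    (fun h => h.choose) (fun _ => 0)

theorem jpart_spec {J K : Set R}
    (huniq : ∀ j ∈ J, ∀ k ∈ K, ∀ j' ∈ J, ∀ k' ∈ K, j + k = j' + k' → j = j')
    {j k : R} (hj : j ∈ J) (hk : k ∈ K) : jpart J K (j + k) = j := by
  have hex : ∃ j', j' ∈ J ∧ ∃ k', k' ∈ K ∧ j + k = j' + k' := ⟨j, hj, k, hk, rfl⟩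
  rw [jpart, dif_pos hex]
  obtain ⟨hj', k', hk', heq⟩ := hex.choose_spec
  exact (huniq j hj k hk _ hj' k' hk' heq).symm

end Helpers

/-- Let `R` be a graded von Neumann regular graded right self-injective
ring and `J` a graded two-sided ideal such that `R/J` is graded nonsingular, i.e. for
every homogeneous `x ∉ J` the graded right ideal `{r | x * r ∈ J}` is not graded
essential in `R`. Then `J = eR` for some central homogeneous idempotent `e`. -/
theorem ideal_is_generated_by_central_idempotent_of_nonsingular_quotient
    [DecidableEq ι] [AddCommGroup ι] [Ring R] (𝒜 : ι → AddSubgroup R) [GradedRing 𝒜]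
    (hreg : GradedVNRegular 𝒜) (hinj : GradedSelfInjective 𝒜)
    (J : Set R) (hJ : IsGradedTwoSidedIdeal 𝒜 J)
    (hns : ∀ x : R, IsHomog 𝒜 x → x ∉ J →
      ¬ GradedEssentialIn 𝒜 {r : R | x * r ∈ J} Set.univ) :
    ∃ e : R, IsHomog 𝒜 e ∧ e * e = e ∧ (∀ r : R, e * r = r * e) ∧
      J = {x : R | e * x = x} := by
  classical
  -- J is a right ideal: abbreviations
  have hJ0 : (0 : R) ∈ J := hJ.1.1.1
  have hJadd : ∀ x ∈ J, ∀ y ∈ J, x + y ∈ J := hJ.1.1.2.1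
  have hJmulr : ∀ x ∈ J, ∀ r : R, x * r ∈ J := hJ.1.1.2.2
  have hJmull : ∀ x ∈ J, ∀ r : R, r * x ∈ J := hJ.2
  have hJcomp : ∀ x ∈ J, ∀ γ : ι, ((DirectSum.decompose 𝒜 x γ : 𝒜 γ) : R) ∈ J := hJ.1.2
  -- the right annihilator of J
  set K0 : Set R := {x | ∀ j ∈ J, j * x = 0} with hK0def
  have hK00 : (0 : R) ∈ K0 := fun j _ => mul_zero j
  have hK0neg : ∀ k ∈ K0, -k ∈ K0 := fun k hk j hj => by rw [mul_neg, hk j hj, neg_zero]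
  have hK0g : IsGradedRightIdeal 𝒜 K0 := by
    refine ⟨⟨hK00, fun x hx y hy j hj => by rw [mul_add, hx j hj, hy j hj, add_zero],
      fun x hx r j hj => by rw [← mul_assoc, hx j hj, zero_mul]⟩, ?_⟩
    intro x hx γ j hj
    conv_lhs => rw [← DirectSum.sum_support_decompose 𝒜 j]
    rw [Finset.sum_mul]
    refine Finset.sum_eq_zero fun μ _ => ?_
    have h1 := myDecomp_mul_left 𝒜 (SetLike.coe_mem (DirectSum.decompose 𝒜 j μ)) x γ
    rw [← h1, hx _ (hJcomp j hj μ)]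
    simp
  have hK0comp : ∀ x ∈ K0, ∀ γ : ι, ((DirectSum.decompose 𝒜 x γ : 𝒜 γ) : R) ∈ K0 := hK0g.2
  -- homogeneous elements of J ∩ K0 vanish
  have hJK0homog : ∀ z : R, (∃ γ, z ∈ 𝒜 γ) → z ∈ J → z ∈ K0 → z = 0 := by
    rintro z hz hzJ hzK
    obtain ⟨b, hb⟩ := hreg z hz
    have h0 : z * b * z = 0 := hzK (z * b) (hJmulr z hzJ b)
    rw [← hb, h0]
  have hJK0 : ∀ z ∈ J, z ∈ K0 → z = 0 := by
    intro z hzJ hzK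
    rw [← DirectSum.sum_support_decompose 𝒜 z]
    refine Finset.sum_eq_zero fun γ _ =>
      hJK0homog _ ⟨γ, SetLike.coe_mem _⟩ (hJcomp z hzJ γ) (hK0comp z hzK γ)
  -- uniqueness of decompositions in J + K0
  have huniq : ∀ j ∈ J, ∀ k ∈ K0, ∀ j' ∈ J, ∀ k' ∈ K0, j + k = j' + k' → j = j' := by
    intro j hj k hk j' hj' k' hk' h
    have hJneg : -j' ∈ J := by rw [← mul_neg_one j']; exact hJmulr j' hj' (-1)
    have hsubJ : j - j' ∈ J := by rw [sub_eq_add_neg]; exact hJadd j hj _ hJneg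
    have hsubK : j - j' ∈ K0 := by
      have : j - j' = k' - k := by
        rw [sub_eq_sub_iff_add_eq_add, h, add_comm]
      rw [this, sub_eq_add_neg]
      exact hK0g.1.2.1 k' hk' _ (hK0neg k hk)
    have := hJK0 _ hsubJ hsubK
    exact sub_eq_zero.mp this
  -- the graded right ideal A = J ⊕ K0
  set A : Set R := {x | ∃ j ∈ J, ∃ k ∈ K0, x = j + k} with hAdef
  have hA : IsGradedRightIdeal 𝒜 A := by
    refine ⟨⟨⟨0, hJ0, 0, hK00, (add_zero 0).symm⟩, ?_, ?_⟩, ?_⟩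
    · rintro x ⟨j, hj, k, hk, rfl⟩ y ⟨j', hj', k', hk', rfl⟩
      exact ⟨j + j', hJadd j hj j' hj', k + k', hK0g.1.2.1 k hk k' hk', by abel⟩
    · rintro x ⟨j, hj, k, hk, rfl⟩ r
      exact ⟨j * r, hJmulr j hj r, k * r, hK0g.1.2.2 k hk r, (add_mul j k r)⟩
    · rintro x ⟨j, hj, k, hk, rfl⟩ γ
      refine ⟨_, hJcomp j hj γ, _, hK0comp k hk γ, ?_⟩
      simp [DirectSum.decompose_add]
  -- A is graded essential
  have hAess : ∀ I : Set R, IsGradedRightIdeal 𝒜 I → (∃ x ∈ I, x ≠ 0) →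
      ∃ x, x ∈ A ∩ I ∧ x ≠ 0 := by
    rintro I hI ⟨x, hxI, hx0⟩
    obtain ⟨y, hyI, γ, hyγ, hy0⟩ := my_exists_homog 𝒜 hI hxI hx0
    by_cases hcase : ∀ j ∈ J, j * y = 0
    · exact ⟨y, ⟨⟨0, hJ0, y, hcase, (zero_add y).symm⟩, hyI⟩, hy0⟩
    · push_neg at hcase
      obtain ⟨j, hjJ, hjy⟩ := hcase
      have hex : ∃ μ, ((DirectSum.decompose 𝒜 j μ : 𝒜 μ) : R) * y ≠ 0 := by
        by_contra hall
        push_neg at hall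
        apply hjy
        conv_lhs => rw [← DirectSum.sum_support_decompose 𝒜 j]
        rw [Finset.sum_mul]
        exact Finset.sum_eq_zero fun μ _ => hall μ
      obtain ⟨μ, hμ⟩ := hex
      set j0 : R := ((DirectSum.decompose 𝒜 j μ : 𝒜 μ) : R) with hj0def
      have hj0J : j0 ∈ J := hJcomp j hjJ μ
      have hj0y : j0 * y ∈ 𝒜 (μ + γ) := SetLike.mul_mem_graded (SetLike.coe_mem _) hyγ
      obtain ⟨b, hb⟩ := hreg (j0 * y) ⟨_, hj0y⟩
      have htJ : y * (b * (j0 * y)) ∈ J :=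
        hJmull _ (hJmull _ (hJmulr j0 hj0J y) b) y
      refine ⟨y * (b * (j0 * y)), ⟨⟨_, htJ, 0, hK00, (add_zero _).symm⟩,
        hI.1.2.2 y hyI _⟩, ?_⟩
      intro h0
      apply hμ
      have : j0 * (y * (b * (j0 * y))) = j0 * y := by
        rw [← mul_assoc, ← mul_assoc]; exact hb
      rw [h0, mul_zero] at this
      exact this.symm
  -- apply graded self-injectivity to the projection A → J
  have hfadd : ∀ x ∈ A, ∀ y ∈ A, jpart J K0 (x + y) = jpart J K0 x + jpart J K0 y := by
    rintro x ⟨j, hj, k, hk, rfl⟩ y ⟨j', hj', k', hk', rfl⟩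
    rw [jpart_spec huniq hj hk, jpart_spec huniq hj' hk']
    have : j + k + (j' + k') = (j + j') + (k + k') := by abel
    rw [this, jpart_spec huniq (hJadd j hj j' hj') (hK0g.1.2.1 k hk k' hk')]
  have hflin : ∀ x ∈ A, ∀ r : R, jpart J K0 (x * r) = jpart J K0 x * r := by
    rintro x ⟨j, hj, k, hk, rfl⟩ r
    rw [jpart_spec huniq hj hk, add_mul,
      jpart_spec huniq (hJmulr j hj r) (hK0g.1.2.2 k hk r)]
  have hfdeg : ∀ δ : ι, ∀ x ∈ A, x ∈ 𝒜 δ → jpart J K0 x ∈ 𝒜 ((0 : ι) + δ) := by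
    rintro δ x ⟨j, hj, k, hk, rfl⟩ hxδ
    rw [jpart_spec huniq hj hk, zero_add]
    have hcompzero : ∀ γ : ι, γ ≠ δ → ((DirectSum.decompose 𝒜 j γ : 𝒜 γ) : R) = 0 := by
      intro γ hγ
      have hx : ((DirectSum.decompose 𝒜 (j + k) γ : 𝒜 γ) : R) = 0 := by
        exact DirectSum.decompose_of_mem_ne 𝒜 hxδ (Ne.symm hγ)
      have hadd : ((DirectSum.decompose 𝒜 (j + k) γ : 𝒜 γ) : R)
          = ((DirectSum.decompose 𝒜 j γ : 𝒜 γ) : R)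
            + ((DirectSum.decompose 𝒜 k γ : 𝒜 γ) : R) := by
        simp [DirectSum.decompose_add]
      rw [hadd] at hx
      have hneg : ((DirectSum.decompose 𝒜 j γ : 𝒜 γ) : R)
          = -((DirectSum.decompose 𝒜 k γ : 𝒜 γ) : R) := eq_neg_of_add_eq_zero_left hx
      refine hJK0homog _ ⟨γ, SetLike.coe_mem _⟩ (hJcomp j hj γ) ?_
      rw [hneg]
      exact hK0neg _ (hK0comp k hk γ)
    rw [← DirectSum.sum_support_decompose 𝒜 j]
    refine AddSubgroup.sum_mem _ fun γ _ => ?_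
    by_cases hγδ : γ = δ
    · subst hγδ; exact SetLike.coe_mem _
    · rw [hcompzero γ hγδ]; exact zero_mem _
  obtain ⟨e, he0, hef⟩ := hinj A hA 0 (jpart J K0) hfadd hflin hfdeg
  -- e acts as identity on J and kills K0
  have heJ : ∀ j ∈ J, e * j = j := by
    intro j hj
    have h1 := jpart_spec huniq hj hK00
    rw [add_zero] at h1
    have h2 := hef j ⟨j, hj, 0, hK00, (add_zero j).symm⟩
    rw [h1] at h2
    exact h2.symm
  have heK : ∀ k ∈ K0, e * k = 0 := by
    intro k hk
    have h1 := jpart_spec huniq hJ0 hk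
    rw [zero_add] at h1
    have h2 := hef k ⟨0, hJ0, k, hk, (zero_add k).symm⟩
    rw [h1] at h2
    exact h2.symm
  -- e ∈ J via nonsingularity of R/J
  have heJmem : e ∈ J := by
    by_contra hne
    refine hns e ⟨0, he0⟩ hne ⟨fun _ _ => trivial, ?_⟩
    intro I hI _ hIne
    obtain ⟨x, ⟨hxA, hxI⟩, hx0⟩ := hAess I hI hIne
    refine ⟨x, ⟨?_, hxI⟩, hx0⟩
    obtain ⟨j, hj, k, hk, rfl⟩ := hxA
    show e * (j + k) ∈ J
    rw [mul_add, heJ j hj, heK k hk, add_zero]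
    exact hj
  have hee : e * e = e := heJ e heJmem
  -- graded nonsingularity of R: elements annihilating A vanish
  have hnsR : ∀ u : R, (∃ δ, u ∈ 𝒜 δ) → (∀ s ∈ A, u * s = 0) → u = 0 := by
    rintro u ⟨δ, huδ⟩ hu
    by_contra hu0
    obtain ⟨b, hbδ, hb⟩ := my_reg_homog 𝒜 hreg huδ
    have hbu0 : b * u ≠ 0 := by
      intro h
      exact hu0 (by rw [← hb, h, mul_zero])
    have hbu00 : b * u ∈ 𝒜 (0 : ι) := by
      have := SetLike.mul_mem_graded hbδ huδ
      rwa [neg_add_cancel] at this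
    have hI : IsGradedRightIdeal 𝒜 {x : R | ∃ r, x = b * u * r} := by
      refine ⟨⟨⟨0, (mul_zero _).symm⟩, ?_, ?_⟩, ?_⟩
      · rintro x ⟨r, rfl⟩ y ⟨r', rfl⟩
        exact ⟨r + r', (mul_add _ r r').symm⟩
      · rintro x ⟨r, rfl⟩ s
        exact ⟨r * s, mul_assoc (b * u) r s⟩
      · rintro x ⟨r, rfl⟩ γ
        refine ⟨((DirectSum.decompose 𝒜 r γ : 𝒜 γ) : R), ?_⟩
        have h1 := myDecomp_mul_left 𝒜 hbu00 r γ
        rw [zero_add] at h1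
        exact h1
    obtain ⟨x, ⟨hxA, ⟨r, rfl⟩⟩, hx0⟩ := hAess _ hI ⟨b * u, ⟨1, (mul_one _).symm⟩, hbu0⟩
    have h1 : u * (b * u * r) = 0 := hu _ hxA
    have h2 : u * (b * u * r) = u * r := by
      rw [← mul_assoc, ← mul_assoc, mul_assoc u b u, hb]
    rw [h2] at h1
    apply hx0
    rw [mul_assoc, h1, mul_zero]
  -- J * (1 - e) = 0, i.e. j * e = j
  have hJehomog : ∀ j ∈ J, ∀ γ : ι, j ∈ 𝒜 γ → j * e = j := by
    intro j hj γ hjγ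
    have hjeγ : j * e ∈ 𝒜 γ := by
      have := SetLike.mul_mem_graded hjγ he0
      rwa [add_zero] at this
    have hu : ∀ s ∈ A, (j - j * e) * s = 0 := by
      rintro s ⟨j', hj', k', hk', rfl⟩
      have hes : e * (j' + k') = j' := by
        rw [mul_add, heJ j' hj', heK k' hk', add_zero]
      rw [sub_mul, mul_assoc j e, hes, mul_add, hk' j hj, add_zero, sub_self]
    have := hnsR (j - j * e) ⟨γ, AddSubgroup.sub_mem _ hjγ hjeγ⟩ hu
    have h := sub_eq_zero.mp this
    exact h.symm
  have hJe : ∀ j ∈ J, j * e = j := by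
    intro j hj
    conv_lhs => rw [← DirectSum.sum_support_decompose 𝒜 j]
    rw [Finset.sum_mul]
    rw [Finset.sum_congr rfl fun γ _ =>
      hJehomog _ (hJcomp j hj γ) γ (SetLike.coe_mem _)]
    exact DirectSum.sum_support_decompose 𝒜 j
  -- e is central
  have hcentral : ∀ r : R, e * r = r * e := by
    intro r
    have h1 : r * e ∈ J := hJmull e heJmem r
    have h2 : e * r ∈ J := hJmulr e heJmem r
    calc e * r = e * r * e := (hJe _ h2).symm
      _ = e * (r * e) := mul_assoc e r e
      _ = r * e := heJ _ h1
  refine ⟨e, ⟨0, he0⟩, hee, hcentral, ?_⟩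
  ext x
  constructor
  · intro hx
    exact heJ x hx
  · intro hx
    have : e * x ∈ J := hJmulr e heJmem x
    rwa [hx] at this
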